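/- Define 4×4 complex matrices in 2×2 block form (blocks of size 2×2): K₁ = (1/√2)·[[I, Z],[0, 0]] and K₂ = (1/√2)·[[Z, −I],[0, 0]], where I is the 2×2 identity and Z = diag(1, −1), and let S(ρ) = K₁ ρ K₁^† + K₂ ρ K₂^†. Then: (a) S is trace-preserving, i.e. K₁^† K₁ + K₂^† K₂ = 1; (b) the range of S is supported on the A block, i.e. P_A S(ρ) P_A = S(ρ) for every ρ; and (c) S does not destroy all coherence between the blocks: there exists a density matrix ρ such that S(ρ) ≠ S(P_A ρ P_A + P_Ā ρ P_Ā). Hence the coherence-destruction conclusion of the main theorem fails when the target subspace is not required to be decoherence-free under S. -/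
import Mathlib


open Matrix BigOperators
open scoped ComplexOrder

/-- The Pauli-Z matrix. -/
noncomputable def pauliZ : Matrix (Fin 2) (Fin 2) ℂ := !![1, 0; 0, -1]

/-- The Kraus operator `K₁ = (1/√2)·[[I, Z],[0, 0]]`. -/
noncomputable def Kone : Matrix (Fin 2 ⊕ Fin 2) (Fin 2 ⊕ Fin 2) ℂ :=
  ((1 / Real.sqrt 2 : ℝ) : ℂ) • Matrix.fromBlocks 1 pauliZ 0 0

/-- The Kraus operator `K₂ = (1/√2)·[[Z, −I],[0, 0]]`. -/
noncomputable def Ktwo : Matrix (Fin 2 ⊕ Fin 2) (Fin 2 ⊕ Fin 2) ℂ :=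
  ((1 / Real.sqrt 2 : ℝ) : ℂ) • Matrix.fromBlocks pauliZ (-1) 0 0

/-- The channel `S(ρ) = K₁ ρ K₁ᴴ + K₂ ρ K₂ᴴ`. -/
noncomputable def chanS (ρ : Matrix (Fin 2 ⊕ Fin 2) (Fin 2 ⊕ Fin 2) ℂ) :
    Matrix (Fin 2 ⊕ Fin 2) (Fin 2 ⊕ Fin 2) ℂ :=
  Kone * ρ * Koneᴴ + Ktwo * ρ * Ktwoᴴ

/-- The orthogonal projection onto the first (`A`) block. -/
noncomputable def projA : Matrix (Fin 2 ⊕ Fin 2) (Fin 2 ⊕ Fin 2) ℂ :=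
  Matrix.fromBlocks 1 0 0 0

private lemma hc : ((Real.sqrt 2 : ℝ) : ℂ)⁻¹ * ((Real.sqrt 2 : ℝ) : ℂ)⁻¹ = 1/2 := by
  rw [← mul_inv, ← Complex.ofReal_mul, Real.mul_self_sqrt (by norm_num : (0:ℝ) ≤ 2)]
  norm_num

private lemma hp : projAᴴ = projA := by
  ext i j
  rcases i with i | i <;> rcases j with j | j <;> fin_cases i <;> fin_cases j <;>
    simp [projA, Matrix.one_apply]

private lemma h1 : projA * Kone = Kone := by
  ext i j
  rcases i with i | i <;> rcases j with j | j <;> fin_cases i <;> fin_cases j <;>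
    simp [projA, Kone, pauliZ, Matrix.mul_apply, Fintype.sum_sum_type, Fin.sum_univ_succ,
      Matrix.one_apply]

private lemma h2 : projA * Ktwo = Ktwo := by
  ext i j
  rcases i with i | i <;> rcases j with j | j <;> fin_cases i <;> fin_cases j <;>
    simp [projA, Ktwo, pauliZ, Matrix.mul_apply, Fintype.sum_sum_type, Fin.sum_univ_succ,
      Matrix.one_apply]

private lemma h1' : Koneᴴ * projA = Koneᴴ := by
  conv_lhs => rw [← hp, ← Matrix.conjTranspose_mul, h1]

private lemma h2' : Ktwoᴴ * projA = Ktwoᴴ := by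
  conv_lhs => rw [← hp, ← Matrix.conjTranspose_mul, h2]

private noncomputable def uMat : Matrix (Fin 2 ⊕ Fin 2) (Fin 2 ⊕ Fin 2) ℂ :=
  ((1 / Real.sqrt 2 : ℝ) : ℂ) • Matrix.fromBlocks !![1,0;0,0] 0 !![0,0;1,0] 0

private noncomputable def Rmat : Matrix (Fin 2 ⊕ Fin 2) (Fin 2 ⊕ Fin 2) ℂ :=
  (1/2 : ℂ) • Matrix.fromBlocks !![1,0;0,0] !![0,1;0,0] !![0,0;1,0] !![0,0;0,1]

private lemma hR : uMat * uMatᴴ = Rmat := by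
  ext i j
  rcases i with i | i <;> rcases j with j | j <;> fin_cases i <;> fin_cases j <;>
    simp [uMat, Rmat, Matrix.mul_apply, Fintype.sum_sum_type, Fin.sum_univ_succ, hc]

private lemma hD : projA * Rmat * projA + (1 - projA) * Rmat * (1 - projA) =
    (1/2 : ℂ) • Matrix.fromBlocks !![1,0;0,0] 0 0 !![0,0;0,1] := by
  ext i j
  rcases i with i | i <;> rcases j with j | j <;> fin_cases i <;> fin_cases j <;>
    simp [projA, Rmat, Matrix.mul_apply, Fintype.sum_sum_type, Fin.sum_univ_succ,
      Matrix.one_apply, Matrix.sub_apply]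

/-- `S` is trace preserving and supported on the `A` block, but
`S` does not destroy all coherence between the blocks: the conclusion of the
main theorem fails when the target subspace is not decoherence-free. -/
theorem counterexample_without_dfs :
    (Koneᴴ * Kone + Ktwoᴴ * Ktwo = 1) ∧
    (∀ ρ : Matrix (Fin 2 ⊕ Fin 2) (Fin 2 ⊕ Fin 2) ℂ,
      projA * chanS ρ * projA = chanS ρ) ∧
    (∃ ρ : Matrix (Fin 2 ⊕ Fin 2) (Fin 2 ⊕ Fin 2) ℂ,
      ρ.PosSemidef ∧ ρ.trace = 1 ∧
      chanS ρ ≠ chanS (projA * ρ * projA + (1 - projA) * ρ * (1 - projA))) := by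
  refine ⟨?_, ?_, ?_⟩
  · ext i j
    rcases i with i | i <;> rcases j with j | j <;> fin_cases i <;> fin_cases j <;>
      simp [Kone, Ktwo, pauliZ, Matrix.mul_apply, Fintype.sum_sum_type, Fin.sum_univ_succ,
        Matrix.one_apply, hc] <;> norm_num [hc]
  · intro ρ
    simp only [chanS, Matrix.mul_add, Matrix.add_mul, Matrix.mul_assoc, h1', h2']
    rw [← Matrix.mul_assoc projA Kone, ← Matrix.mul_assoc projA Ktwo, h1, h2]
  · refine ⟨Rmat, hR ▸ Matrix.posSemidef_self_mul_conjTranspose uMat, ?_, ?_⟩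
    · simp [Rmat, Matrix.trace, Matrix.diag, Fintype.sum_sum_type, Fin.sum_univ_succ]
      norm_num
    · rw [hD]
      intro h
      have := congrFun (congrFun h (Sum.inl 0)) (Sum.inl 1)
      simp [chanS, Kone, Ktwo, Rmat, pauliZ, Matrix.mul_apply, Fintype.sum_sum_type,
        Fin.sum_univ_succ, hc, Matrix.one_apply, Fin.ext_iff] at this
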